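/- Let V be a nonempty finite type, d : V → V → ℝ a distance function, f : V → ℝ, and r, g ∈ V with d(g,g) = 0, and suppose f is admissible: f(u) ≤ d(u,g) for all u ∈ V. Let T ∈ ℕ, let v_0, v_1, …, v_T ∈ V be pairwise distinct with v_0 = r and v_T = g, and let w_1, …, w_T ∈ V and step costs c_1, …, c_T ∈ ℝ satisfy, for every i ∈ {1,…,T}: (a) d(v_{i−1}, g) = d(v_{i−1}, w_i) + d(w_i, g), and (b) f(v_i) + c_i ≤ f(w_i) + d(v_{i−1}, w_i). Then Σ_{i=1}^T c_i ≤ d(r,g) + Σ_{u ∈ V} (d(u,g) − f(u)). -/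

import Mathlib

/-- Trajectory form of the admissible-predictions corollary: greedy graph search with
admissible predictions satisfies `ALG ≤ OPT + E₁`. -/
theorem greedy_search_admissible_error
    {V : Type*} [Fintype V] [Nonempty V]
    (d : V → V → ℝ) (f : V → ℝ) (r g : V) (hgg : d g g = 0)
    (hadm : ∀ u : V, f u ≤ d u g)
    (T : ℕ) (v : Fin (T + 1) → V) (hv : Function.Injective v)
    (hv0 : v 0 = r) (hvT : v (Fin.last T) = g)
    (w : Fin T → V) (c : Fin T → ℝ)
    (ha : ∀ i : Fin T, d (v i.castSucc) g = d (v i.castSucc) (w i) + d (w i) g)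
    (hb : ∀ i : Fin T, f (v i.succ) + c i ≤ f (w i) + d (v i.castSucc) (w i)) :
    ∑ i, c i ≤ d r g + ∑ u, (d u g - f u) := by
  have key : ∀ i : Fin T, c i ≤ d (v i.castSucc) g - f (v i.succ) := by
    intro i
    have h1 := hb i
    have h2 := hadm (w i)
    have h3 := ha i
    linarith
  have hshift : ∑ i : Fin T, d (v i.castSucc) g
      = d r g + ∑ i : Fin T, d (v i.succ) g := by
    have h1 := Fin.sum_univ_castSucc (fun j : Fin (T + 1) => d (v j) g)
    have h2 := Fin.sum_univ_succ (fun j : Fin (T + 1) => d (v j) g)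
    simp only [hvT, hgg, hv0] at h1 h2
    linarith
  have step1 : ∑ i, c i ≤ d r g + ∑ i : Fin T, (d (v i.succ) g - f (v i.succ)) := by
    calc ∑ i, c i ≤ ∑ i : Fin T, (d (v i.castSucc) g - f (v i.succ)) :=
          Finset.sum_le_sum (fun i _ => key i)
      _ = ∑ i : Fin T, d (v i.castSucc) g - ∑ i : Fin T, f (v i.succ) :=
          Finset.sum_sub_distrib _ _
      _ = d r g + (∑ i : Fin T, d (v i.succ) g - ∑ i : Fin T, f (v i.succ)) := by
          rw [hshift]; ring
      _ = d r g + ∑ i : Fin T, (d (v i.succ) g - f (v i.succ)) := by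
          rw [Finset.sum_sub_distrib]
  refine step1.trans (add_le_add_right ?_ _)
  classical
  have hinj : Set.InjOn (fun i : Fin T => v i.succ) (Finset.univ : Finset (Fin T)) := by
    intro a _ b _ hab
    exact Fin.succ_injective _ (hv hab)
  calc ∑ i : Fin T, (d (v i.succ) g - f (v i.succ))
      = ∑ u ∈ Finset.univ.image (fun i : Fin T => v i.succ), (d u g - f u) :=
        by rw [Finset.sum_image (fun a ha b hb hab => hinj ha hb hab)]
    _ ≤ ∑ u, (d u g - f u) :=
        Finset.sum_le_sum_of_subset_of_nonneg (Finset.subset_univ _)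
          (fun u _ _ => sub_nonneg.2 (hadm u))
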